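/- In the ring A = Z_3[[a_1, b_1, a_2, b_2]]/(a_1 b_1 - 3, a_2 b_2 - 3) with maximal ideal m, the images of a_1 and a_2 in m/m^2 are linearly independent over the residue field F_3; equivalently, for integers c, d, if c*a_1 + d*a_2 lies in m^2 then 3 divides c and 3 divides d. -/

import Mathlib

set_option maxHeartbeats 1000000
set_option synthInstance.maxHeartbeats 200000


/-! The ring `A = ℤ₃[[a₁, b₁, a₂, b₂]] / (a₁b₁ - 3, a₂b₂ - 3)`, where `ℤ₃ = ℤ_[3]` is the
ring of 3-adic integers: the completed local ring of the family of compactified jacobians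
at the point `[I]`, `I = ν⁎𝒪(-2)`, in Kass's example. -/

/-- The formal power series ring `ℤ₃[[a₁, b₁, a₂, b₂]]` in four variables over the
3-adic integers. -/
abbrev B : Type := MvPowerSeries (Fin 4) ℤ_[3]

/-- The ideal `(a₁b₁ - 3, a₂b₂ - 3)` of `ℤ₃[[a₁, b₁, a₂, b₂]]`, where `a₁, b₁, a₂, b₂`
are the four variables. -/
noncomputable abbrev relIdeal : Ideal B :=
  Ideal.span {MvPowerSeries.X 0 * MvPowerSeries.X 1 - 3,
    MvPowerSeries.X 2 * MvPowerSeries.X 3 - 3}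

/-- The ring `A = ℤ₃[[a₁, b₁, a₂, b₂]] / (a₁b₁ - 3, a₂b₂ - 3)`. -/
abbrev A : Type := B ⧸ relIdeal

/-- The image `a₁` in `A` of the first variable. -/
noncomputable def a1 : A := Ideal.Quotient.mk relIdeal (MvPowerSeries.X 0)

/-- The image `b₁` in `A` of the second variable. -/
noncomputable def b1 : A := Ideal.Quotient.mk relIdeal (MvPowerSeries.X 1)

/-- The image `a₂` in `A` of the third variable. -/
noncomputable def a2 : A := Ideal.Quotient.mk relIdeal (MvPowerSeries.X 2)

/-- The image `b₂` in `A` of the fourth variable. -/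
noncomputable def b2 : A := Ideal.Quotient.mk relIdeal (MvPowerSeries.X 3)

/-- The maximal ideal `m = (3, a₁, b₁, a₂, b₂)` of `A`. -/
noncomputable def m : Ideal A := Ideal.span {(3 : A), a1, b1, a2, b2}

open MvPowerSeries Finsupp TrivSqZeroExt

abbrev D : Type := TrivSqZeroExt (ZMod 3) (ZMod 3)

def mkD (a b : ZMod 3) : D := (a, b)

@[simp] lemma fst_mkD (a b : ZMod 3) : (mkD a b).fst = a := rfl

@[simp] lemma snd_mkD (a b : ZMod 3) : (mkD a b).snd = b := rfl

lemma coeff_single_one_mul (i : Fin 4) (f g : B) :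
    MvPowerSeries.coeff (R := ℤ_[3]) (Finsupp.single i 1) (f * g) =
      MvPowerSeries.coeff (R := ℤ_[3]) 0 f * MvPowerSeries.coeff (R := ℤ_[3]) (Finsupp.single i 1) g +
      MvPowerSeries.coeff (R := ℤ_[3]) (Finsupp.single i 1) f * MvPowerSeries.coeff (R := ℤ_[3]) 0 g := by
  rw [MvPowerSeries.coeff_mul, Finsupp.antidiagonal_single, Finset.sum_map]
  rw [show (Finset.HasAntidiagonal.antidiagonal (1 : ℕ) : Finset (ℕ × ℕ)) = {(0,1),(1,0)} from rfl]
  simp [Finsupp.single_zero]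

noncomputable def phi (i : Fin 4) : B →+* D where
  toFun f := mkD (PadicInt.toZMod (MvPowerSeries.coeff (R := ℤ_[3]) 0 f))
              (PadicInt.toZMod (MvPowerSeries.coeff (R := ℤ_[3]) (Finsupp.single i 1) f))
  map_one' := by
    ext
    · simp [MvPowerSeries.coeff_zero_eq_constantCoeff]
    · simp [MvPowerSeries.coeff_one, Finsupp.single_eq_zero]
  map_mul' f g := by
    ext
    · simp [MvPowerSeries.coeff_zero_eq_constantCoeff, fst_mul]
    · simp [snd_mul, coeff_single_one_mul, smul_eq_mul, mul_comm]
  map_zero' := by ext <;> simp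
  map_add' f g := by ext <;> simp

lemma phi_X (i j : Fin 4) : phi i (MvPowerSeries.X j) =
    mkD 0 (if i = j then 1 else 0) := by
  ext
  · simp [phi, MvPowerSeries.coeff_zero_X]
  · simp only [phi, RingHom.coe_mk, MonoidHom.coe_mk, OneHom.coe_mk, snd_mk, snd_mkD,
      MvPowerSeries.coeff_X]
    simp only [Finsupp.single_left_inj (one_ne_zero (α := ℕ))]
    split <;> simp

lemma three_eq_zero : (3 : D) = 0 := by
  have : ((3 : ℕ) : D) = 0 := by
    ext
    · rw [fst_natCast]; decide
    · rw [snd_natCast]; rfl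
  simpa using this

lemma mul_fst_zero (x y : D) (hx : x.fst = 0) (hy : y.fst = 0) : x * y = 0 := by
  ext
  · simp [fst_mul, hx]
  · simp [snd_mul, hx, hy]

lemma phi_rel (i : Fin 4) : ∀ x ∈ relIdeal, phi i x = 0 := by
  intro x hx
  rw [← RingHom.mem_ker]
  refine Ideal.span_le.2 ?_ hx
  rintro y (rfl | rfl) <;>
  · simp only [SetLike.mem_coe, RingHom.mem_ker, map_sub, map_mul, phi_X]
    rw [mul_fst_zero _ _ (by simp) (by simp)]
    rw [show ((3 : B) = ((3:ℕ) : B)) by norm_num, map_natCast]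
    rw [show (((3:ℕ) : D) = (3:D)) by norm_num, three_eq_zero, sub_zero]

noncomputable def Phi (i : Fin 4) : A →+* D :=
  Ideal.Quotient.lift relIdeal (phi i) (phi_rel i)

lemma Phi_gen (i : Fin 4) :
    Phi i a1 = mkD 0 (if i = 0 then 1 else 0) ∧ Phi i b1 = mkD 0 (if i = 1 then 1 else 0) ∧
    Phi i a2 = mkD 0 (if i = 2 then 1 else 0) ∧ Phi i b2 = mkD 0 (if i = 3 then 1 else 0) := by
  refine ⟨?_, ?_, ?_, ?_⟩ <;>
    simp [Phi, a1, b1, a2, b2, Ideal.Quotient.lift_mk, phi_X]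

lemma Phi_m_sq (i : Fin 4) {x : A} (hx : x ∈ m ^ 2) : Phi i x = 0 := by
  set I : Ideal D := RingHom.ker ((TrivSqZeroExt.fstHom (ZMod 3) (ZMod 3) (ZMod 3)).toRingHom)
  have hgen : ∀ y ∈ ({(3:A), a1, b1, a2, b2} : Set A), (Phi i y).fst = 0 := by
    obtain ⟨h1, h2, h3, h4⟩ := Phi_gen i
    rintro y (rfl | rfl | rfl | rfl | rfl)
    · rw [map_ofNat, show ((3:D) = 0) from three_eq_zero, fst_zero]
    · rw [h1]; rfl
    · rw [h2]; rfl
    · rw [h3]; rfl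
    · rw [h4]; rfl
  have hmI : m.map (Phi i) ≤ I := by
    rw [Ideal.map_le_iff_le_comap, m, Ideal.span_le]
    intro y hy
    exact Ideal.mem_comap.2 (RingHom.mem_ker.2 (by simpa using hgen y hy))
  have hI2 : I ^ 2 = ⊥ := by
    rw [pow_two, ← le_bot_iff]
    exact Ideal.mul_le.2 fun r hr s hs => by
      simp only [Ideal.mem_bot]
      exact mul_fst_zero r s hr hs
  have : Phi i x ∈ (m.map (Phi i)) ^ 2 := by
    rw [← Ideal.map_pow]
    exact Ideal.mem_map_of_mem _ hx
  have := (Ideal.pow_right_mono hmI 2) this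
  rw [hI2] at this
  simpa using this


/-- The images of `a₁` and `a₂` in `m/m²` are linearly independent over the residue
field `𝔽₃`: for integers `c, d`, if `c·a₁ + d·a₂` lies in `m²` then `3 ∣ c` and
`3 ∣ d`. -/
theorem a1_a2_linearly_independent_in_cotangent :
    ∀ c d : ℤ, (c : A) * a1 + (d : A) * a2 ∈ m ^ 2 → (3 : ℤ) ∣ c ∧ (3 : ℤ) ∣ d := by
  intro c d hx
  constructor
  · have h := Phi_m_sq 0 hx
    obtain ⟨h1, -, h3, -⟩ := Phi_gen 0
    simp only [map_add, map_mul, map_intCast, h1, h3] at h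
    have := congrArg TrivSqZeroExt.snd h
    simp only [snd_add, snd_mul, fst_intCast, snd_intCast, snd_mk, snd_mkD, snd_zero,
      smul_eq_mul] at this
    simp at this
    exact_mod_cast (ZMod.intCast_zmod_eq_zero_iff_dvd c 3).1 this
  · have h := Phi_m_sq 2 hx
    obtain ⟨h1, -, h3, -⟩ := Phi_gen 2
    simp only [map_add, map_mul, map_intCast, h1, h3] at h
    have := congrArg TrivSqZeroExt.snd h
    simp only [snd_add, snd_mul, fst_intCast, snd_intCast, snd_mk, snd_mkD, snd_zero,
      smul_eq_mul] at this
    simp at this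
    exact_mod_cast (ZMod.intCast_zmod_eq_zero_iff_dvd d 3).1 this
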